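/- For all natural numbers m, n, k, one has C(m, n, k) = Σ_{i=0}^{n} Σ_{j=0}^{i} binom(n, i) · binom(i, j) · binom(m, k - i + j), where the factor binom(m, k - i + j) is interpreted as 0 whenever i > k + j. -/

import Mathlib

open Finset

/-- The set of ternary words of length `m + n` (as functions `Fin (m+n) → Fin 3`)
having exactly `k` letters equal to `2` and no letter equal to `0` among the
first `m` letters. -/
def ternaryWords (m n k : ℕ) : Finset (Fin (m + n) → Fin 3) :=
  univ.filter fun w =>
    (univ.filter fun i => w i = 2).card = k ∧ ∀ i : Fin (m + n), (i : ℕ) < m → w i ≠ 0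

/-- `C m n k` is the number of ternary words of length `m + n` with exactly `k`
twos and no zero among the first `m` letters; it equals the inset number
`{m,n choose k}` of Janjić–Petković. -/
def C (m n k : ℕ) : ℕ := (ternaryWords m n k).card

lemma count_snoc (m n : ℕ) (v : Fin (m + n) → Fin 3) (c : Fin 3) :
    (univ.filter fun i : Fin (m + (n+1)) => (Fin.snoc v c : Fin (m+n+1) → Fin 3) i = 2).card
      = (univ.filter fun i => v i = 2).card + if c = 2 then 1 else 0 := by
  rw [Finset.card_filter, Finset.card_filter]
  show (∑ i : Fin (m+n+1), if (Fin.snoc v c : Fin (m+n+1) → Fin 3) i = 2 then (1:ℕ) else 0) = _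
  rw [Fin.sum_univ_castSucc]
  simp [Fin.snoc_castSucc, Fin.snoc_last]

lemma C_base (m k : ℕ) : C m 0 k = m.choose k := by
  have h : C m 0 k = (Finset.powersetCard k (univ : Finset (Fin (m+0)))).card := by
    refine Finset.card_bij' (fun w _ => univ.filter fun i => w i = 2)
      (fun s _ => fun i => if i ∈ s then 2 else 1) ?hi ?hj ?li ?ri
    case hi =>
      intro w hw
      simp only [ternaryWords, Finset.mem_filter, Finset.mem_univ, true_and] at hw
      simpa [Finset.mem_powersetCard_univ] using hw.1
    case hj =>
      intro s hs
      simp only [Finset.mem_powersetCard_univ] at hs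
      simp only [ternaryWords, Finset.mem_filter, Finset.mem_univ, true_and]
      constructor
      · rw [← hs]
        congr 1
        ext i
        by_cases h : i ∈ s <;> simp [h]
      · intro i _
        by_cases h : i ∈ s <;> simp [h]
    case li =>
      intro w hw
      simp only [ternaryWords, Finset.mem_filter, Finset.mem_univ, true_and] at hw
      funext i
      have h0 : w i ≠ 0 := hw.2 i (by omega)
      by_cases h : w i = 2
      · simp [h]
      · have h1 : w i = 1 := by
          have := (w i).isLt
          simp only [Fin.ext_iff] at h0 h ⊢
          simp only [Fin.val_one, Fin.val_zero, Fin.val_two] at *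
          omega
        simp [h, h1]
    case ri =>
      intro s hs
      ext i
      by_cases h : i ∈ s <;> simp [h]
  rw [h, Finset.card_powersetCard, Finset.card_univ, Fintype.card_fin]
  rfl

lemma fiber (m n k k' : ℕ) (c : Fin 3) (hk : k = k' + if c = 2 then 1 else 0) :
    ((ternaryWords m (n+1) k).filter fun w => w (Fin.last (m+n)) = c).card = C m n k' := by
  refine Finset.card_bij' (fun w _ => Fin.init (w : Fin (m+n+1) → Fin 3))
    (fun v _ => (Fin.snoc v c : Fin (m+n+1) → Fin 3)) ?hi ?hj ?li ?ri
  case hi =>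
    intro w hw
    simp only [Finset.mem_filter, ternaryWords, Finset.mem_univ, true_and] at hw
    obtain ⟨⟨hcard, hcon⟩, hlast⟩ := hw
    have hsnoc : (Fin.snoc (Fin.init w) c : Fin (m+n+1) → Fin 3) = w := by
      rw [← hlast]; exact Fin.snoc_init_self w
    simp only [ternaryWords, Finset.mem_filter, Finset.mem_univ, true_and]
    constructor
    · rw [← hsnoc] at hcard
      rw [count_snoc] at hcard
      omega
    · intro i hi
      have : Fin.init w i = w i.castSucc := rfl
      rw [this]
      exact hcon i.castSucc (by simpa using hi)
  case hj =>
    intro v hv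
    simp only [ternaryWords, Finset.mem_filter, Finset.mem_univ, true_and] at hv
    obtain ⟨hcard, hcon⟩ := hv
    simp only [Finset.mem_filter, ternaryWords, Finset.mem_univ, true_and]
    refine ⟨⟨?_, ?_⟩, ?_⟩
    · rw [count_snoc, hcard]; omega
    · intro i hi
      induction i using Fin.lastCases with
      | last =>
        exfalso
        simp only [Fin.val_last, Nat.add_eq] at hi
        omega
      | cast j =>
        rw [Fin.snoc_castSucc]
        exact hcon j (by simpa using hi)
    · simp
  case li =>
    intro w hw
    simp only [Finset.mem_filter] at hw
    have h : Fin.snoc (Fin.init w) (w (Fin.last (m+n))) = w := Fin.snoc_init_self w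
    rw [hw.2] at h
    exact h
  case ri =>
    intro v hv
    simp

lemma fiber2_zero (m n : ℕ) :
    ((ternaryWords m (n+1) 0).filter fun w => w (Fin.last (m+n)) = 2).card = 0 := by
  rw [Finset.card_eq_zero, Finset.filter_eq_empty_iff]
  intro w hw
  simp only [ternaryWords, Finset.mem_filter, Finset.mem_univ, true_and] at hw
  intro hlast
  have : (Fin.last (m+n) : Fin (m+n+1)) ∈ (univ.filter fun i : Fin (m+(n+1)) => w i = 2) := by
    simp [hlast]
  have := Finset.card_pos.mpr ⟨_, this⟩
  omega

lemma C_split (m n k : ℕ) :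
    C m (n+1) k = ∑ c : Fin 3, ((ternaryWords m (n+1) k).filter fun w => w (Fin.last (m+n)) = c).card := by
  exact Finset.card_eq_sum_card_fiberwise (fun w _ => Finset.mem_univ _)

lemma C_rec0 (m n : ℕ) : C m (n+1) 0 = 2 * C m n 0 := by
  rw [C_split, Fin.sum_univ_three, fiber m n 0 0 0 (by decide), fiber m n 0 0 1 (by decide),
    fiber2_zero]
  ring

lemma C_recS (m n k : ℕ) : C m (n+1) (k+1) = 2 * C m n (k+1) + C m n k := by
  rw [C_split, Fin.sum_univ_three, fiber m n (k+1) (k+1) 0 (by simp),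
    fiber m n (k+1) (k+1) 1 (by simp), fiber m n (k+1) k 2 (by simp)]
  ring

def T (m n k : ℕ) : ℕ :=
  ∑ s ∈ Finset.range (n+1), n.choose s * 2^(n-s) * (if s ≤ k then m.choose (k-s) else 0)

lemma T_base (m k : ℕ) : T m 0 k = m.choose k := by
  simp [T]

lemma T_zero (m n : ℕ) : T m n 0 = 2^n := by
  rw [T, Finset.sum_eq_single 0]
  · simp
  · intro s hs hs0
    simp [Nat.le_zero, hs0]
  · simp

lemma T_rec0 (m n : ℕ) : T m (n+1) 0 = 2 * T m n 0 := by
  rw [T_zero, T_zero, pow_succ]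
  ring

lemma T_recS (m n k : ℕ) : T m (n+1) (k+1) = 2 * T m n (k+1) + T m n k := by
  set F : ℕ → ℕ := fun s => if s ≤ k+1 then m.choose (k+1-s) else 0 with hF
  have hFs : ∀ s, F (s+1) = if s ≤ k then m.choose (k-s) else 0 := by
    intro s
    by_cases h : s ≤ k
    · rw [hF]
      simp only
      rw [if_pos (by omega : s+1 ≤ k+1), if_pos h]
      congr 1
      omega
    · rw [hF]
      simp only
      rw [if_neg (by omega), if_neg h]
  have hTk : T m n k = ∑ s ∈ Finset.range (n+1), n.choose s * 2^(n-s) * F (s+1) := by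
    refine Finset.sum_congr rfl fun s _ => ?_
    rw [hFs]
  have hT1 : T m (n+1) (k+1)
      = (∑ s ∈ Finset.range (n+1), (n+1).choose (s+1) * 2^(n-s) * F (s+1))
        + 1 * 2^(n+1) * F 0 := by
    rw [T, Finset.sum_range_succ']
    congr 1
    refine Finset.sum_congr rfl fun s _ => ?_
    rw [show n+1-(s+1) = n-s from by omega]
  have hdbl : ∀ s, n.choose (s+1) * 2^(n-s) * F (s+1)
      = 2 * (n.choose (s+1) * 2^(n-(s+1)) * F (s+1)) := by
    intro s
    by_cases h : s+1 ≤ n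
    · rw [show n-s = (n-(s+1))+1 from by omega, pow_succ]
      ring
    · rw [Nat.choose_eq_zero_of_lt (by omega)]
      ring
  have hg : ∑ s ∈ Finset.range (n+2), n.choose s * 2^(n-s) * F s = T m n (k+1) := by
    rw [Finset.sum_range_succ, Nat.choose_eq_zero_of_lt (by omega), zero_mul, zero_mul,
      add_zero, T]
  have h2T : 2 * T m n (k+1)
      = (∑ s ∈ Finset.range (n+1), n.choose (s+1) * 2^(n-s) * F (s+1)) + 1 * 2^(n+1) * F 0 := by
    rw [← hg, Finset.sum_range_succ', Nat.mul_add, Finset.mul_sum]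
    have : ∀ s ∈ Finset.range (n+1),
        2 * (n.choose (s+1) * 2^(n-(s+1)) * F (s+1)) = n.choose (s+1) * 2^(n-s) * F (s+1) :=
      fun s _ => (hdbl s).symm
    rw [Finset.sum_congr rfl this]
    congr 1
    rw [Nat.choose_zero_right, Nat.sub_zero, pow_succ]
    ring
  have hsplit : ∀ s ∈ Finset.range (n+1), (n+1).choose (s+1) * 2^(n-s) * F (s+1)
      = n.choose s * 2^(n-s) * F (s+1) + n.choose (s+1) * 2^(n-s) * F (s+1) := by
    intro s _
    rw [Nat.choose_succ_succ']
    ring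
  rw [hT1, Finset.sum_congr rfl hsplit, Finset.sum_add_distrib, h2T, hTk]
  ring

lemma C_eq_T (m n k : ℕ) : C m n k = T m n k := by
  induction n generalizing k with
  | zero => rw [C_base, T_base]
  | succ n ih =>
    cases k with
    | zero => rw [C_rec0, T_rec0, ih]
    | succ k => rw [C_recS, T_recS, ih, ih]

lemma choose_mul_sum (n j : ℕ) (hj : j ≤ n) :
    ∑ i ∈ Finset.range (n+1), n.choose i * i.choose j = n.choose j * 2^(n-j) := by
  have h1 : ∑ i ∈ Finset.range (n+1), n.choose i * i.choose j
      = ∑ i ∈ Finset.Ico j (n+1), n.choose i * i.choose j := by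
    refine (Finset.sum_subset ?_ ?_).symm
    · intro x hx
      rw [Finset.mem_Ico] at hx
      rw [Finset.mem_range]
      omega
    · intro x hx hx'
      rw [Finset.mem_range] at hx
      rw [Finset.mem_Ico] at hx'
      rw [Nat.choose_eq_zero_of_lt (show x < j by omega)]
      ring
  rw [h1, Finset.sum_Ico_eq_sum_range]
  have h2 : ∀ t ∈ Finset.range (n+1-j), n.choose (j+t) * (j+t).choose j
      = n.choose j * (n-j).choose t := by
    intro t ht
    rw [Finset.mem_range] at ht
    rw [Nat.choose_mul (by omega)]
    congr 2
    omega
  rw [Finset.sum_congr rfl h2, ← Finset.mul_sum,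
    show n+1-j = (n-j)+1 from by omega, Nat.sum_range_choose]

lemma RHS_eq_T (m n k : ℕ) :
    (∑ i ∈ Finset.range (n + 1), ∑ j ∈ Finset.range (i + 1),
        n.choose i * i.choose j * (if i ≤ k + j then m.choose (k + j - i) else 0))
      = T m n k := by
  have e1 : ∀ i ∈ Finset.range (n+1),
      (∑ j ∈ Finset.range (i + 1),
        n.choose i * i.choose j * (if i ≤ k + j then m.choose (k + j - i) else 0))
      = ∑ j ∈ Finset.range (n + 1),
          n.choose i * i.choose j * (if j ≤ k then m.choose (k - j) else 0) := by
    intro i hi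
    rw [Finset.mem_range] at hi
    have refl1 : (∑ j ∈ Finset.range (i + 1),
        n.choose i * i.choose j * (if i ≤ k + j then m.choose (k + j - i) else 0))
        = ∑ j ∈ Finset.range (i + 1),
            n.choose i * i.choose j * (if j ≤ k then m.choose (k - j) else 0) := by
      rw [← Finset.sum_range_reflect]
      refine Finset.sum_congr rfl fun j hj => ?_
      rw [Finset.mem_range] at hj
      have hj' : j ≤ i := by omega
      rw [show i+1-1-j = i-j from by omega, Nat.choose_symm hj']
      by_cases h : j ≤ k
      · rw [if_pos (by omega), if_pos h, show k+(i-j)-i = k-j from by omega]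
      · rw [if_neg (by omega), if_neg h]
    rw [refl1]
    refine Finset.sum_subset ?_ ?_
    · intro x hx
      rw [Finset.mem_range] at hx ⊢
      omega
    · intro x hx hx'
      rw [Finset.mem_range] at hx hx'
      rw [Nat.choose_eq_zero_of_lt (by omega : i < x)]
      ring
  rw [Finset.sum_congr rfl e1, Finset.sum_comm, T]
  refine Finset.sum_congr rfl fun j hj => ?_
  rw [Finset.mem_range] at hj
  have : ∀ i ∈ Finset.range (n+1),
      n.choose i * i.choose j * (if j ≤ k then m.choose (k - j) else 0)
      = n.choose i * i.choose j * (if j ≤ k then m.choose (k - j) else 0) := fun _ _ => rfl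
  rw [← Finset.sum_mul, choose_mul_sum n j (by omega)]

theorem stmt_13 (m n k : ℕ) :
    C m n k =
      ∑ i ∈ Finset.range (n + 1), ∑ j ∈ Finset.range (i + 1),
        n.choose i * i.choose j * (if i ≤ k + j then m.choose (k + j - i) else 0) := by
  rw [C_eq_T, RHS_eq_T]
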